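/- The braided crossed-module condition d(a)▷b = a_(1) ((a_(2))^(1)▷b) S_B((a_(2))^(2)) holds for all a, b ∈ B if and only if ((d(a_(1))(a_(2))^(1))▷b)(a_(2))^(2) = ab holds for all a, b ∈ B, i.e. if and only if B is braided commutative as an algebra with respect to the coaction Δ_L(b) = d(b_(1))(b_(2))^(1) ⊗ (b_(2))^(2) induced by d. (Lemma 3.3(i).) -/

import Mathlib

open TensorProduct

noncomputable section

variable (k H B : Type*) [Field k] [Ring H] [HopfAlgebra k H]
  [Ring B] [Algebra k B] [Coalgebra k B]

/-- The coaction on `B` induced by `d`: `Δ_L(b) = d(b₁)(b₂)⁽¹⁾ ⊗ (b₂)⁽²⁾`. -/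
def DLind (δ : B →ₗ[k] H ⊗[k] B) (d : B →ₗ[k] H) : B →ₗ[k] H ⊗[k] B :=
  map (LinearMap.mul' k H) LinearMap.id
    ∘ₗ (TensorProduct.assoc k H H B).symm.toLinearMap
    ∘ₗ map d δ
    ∘ₗ (Coalgebra.comul : B →ₗ[k] B ⊗[k] B)

/-- The data of a braided Hopf crossed module: `B` is a Hopf algebra in the braided
category of crossed `H`-modules via the action `act` and coaction `δ`, with braided
antipode `SB`, and `d : B → H` is a twisted Hopf algebra map satisfying
`d(h▷b) = h₁ d(b) S(h₂)`. -/
structure BraidedHopfPrecrossedModule (act : H ⊗[k] B →ₗ[k] B) (δ : B →ₗ[k] H ⊗[k] B)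
    (SB : B →ₗ[k] B) (d : B →ₗ[k] H) : Prop where
  /-- `(hg)▷b = h▷(g▷b)` -/
  act_mul : ∀ (h g : H) (b : B), act ((h * g) ⊗ₜ[k] b) = act (h ⊗ₜ[k] act (g ⊗ₜ[k] b))
  /-- `1▷b = b` -/
  act_one : ∀ b : B, act ((1 : H) ⊗ₜ[k] b) = b
  /-- module algebra: `h▷(ab) = (h₁▷a)(h₂▷b)` -/
  act_mul_alg : act ∘ₗ map LinearMap.id (LinearMap.mul' k B)
      = LinearMap.mul' k B ∘ₗ map act act
          ∘ₗ (tensorTensorTensorComm k H H B B).toLinearMap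
          ∘ₗ map (Coalgebra.comul : H →ₗ[k] H ⊗[k] H) LinearMap.id
  /-- module algebra: `h▷1 = ε(h)1` -/
  act_unit : ∀ h : H, act (h ⊗ₜ[k] (1 : B)) = (Coalgebra.counit h : k) • (1 : B)
  /-- module coalgebra: `Δ(h▷b) = (h₁▷b₁)⊗(h₂▷b₂)` -/
  act_comul : (Coalgebra.comul : B →ₗ[k] B ⊗[k] B) ∘ₗ act
      = map act act ∘ₗ (tensorTensorTensorComm k H H B B).toLinearMap
          ∘ₗ map (Coalgebra.comul : H →ₗ[k] H ⊗[k] H) (Coalgebra.comul : B →ₗ[k] B ⊗[k] B)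
  /-- module coalgebra: `ε(h▷b) = ε(h)ε(b)` -/
  act_counit : ∀ (h : H) (b : B),
      (Coalgebra.counit (act (h ⊗ₜ[k] b)) : k) = Coalgebra.counit h * Coalgebra.counit b
  /-- `δ` is a coassociative left coaction -/
  coact_coassoc : (TensorProduct.assoc k H H B).toLinearMap
        ∘ₗ map (Coalgebra.comul : H →ₗ[k] H ⊗[k] H) LinearMap.id ∘ₗ δ
      = map LinearMap.id δ ∘ₗ δ
  /-- `δ` is counital -/
  coact_counit : (TensorProduct.lid k B).toLinearMap
        ∘ₗ map (Coalgebra.counit : H →ₗ[k] k) LinearMap.id ∘ₗ δ = LinearMap.id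
  /-- comodule algebra: `δ(ab) = a⁽¹⁾b⁽¹⁾ ⊗ a⁽²⁾b⁽²⁾` -/
  comod_alg : δ ∘ₗ LinearMap.mul' k B
      = map (LinearMap.mul' k H) (LinearMap.mul' k B)
          ∘ₗ (tensorTensorTensorComm k H B H B).toLinearMap ∘ₗ map δ δ
  /-- comodule algebra: `δ(1) = 1⊗1` -/
  comod_one : δ 1 = (1 : H) ⊗ₜ[k] (1 : B)
  /-- comodule coalgebra: `b⁽¹⁾ ⊗ Δ(b⁽²⁾) = (b₁)⁽¹⁾(b₂)⁽¹⁾ ⊗ (b₁)⁽²⁾ ⊗ (b₂)⁽²⁾` -/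
  comod_comul : map LinearMap.id (Coalgebra.comul : B →ₗ[k] B ⊗[k] B) ∘ₗ δ
      = map (LinearMap.mul' k H) LinearMap.id
          ∘ₗ (tensorTensorTensorComm k H B H B).toLinearMap
          ∘ₗ map δ δ ∘ₗ (Coalgebra.comul : B →ₗ[k] B ⊗[k] B)
  /-- crossed (Yetter–Drinfeld) compatibility:
  `δ(h▷b) = h₁ b⁽¹⁾ S(h₂) ⊗ (h₃▷b⁽²⁾)` -/
  yd_compat : δ ∘ₗ act
      = map (LinearMap.mul' k H) LinearMap.id
          ∘ₗ (TensorProduct.assoc k H H B).symm.toLinearMap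
          ∘ₗ map (LinearMap.mul' k H)
              (map (HopfAlgebra.antipode (R := k) : H →ₗ[k] H) act
                ∘ₗ (TensorProduct.assoc k H H B).toLinearMap)
          ∘ₗ (tensorTensorTensorComm k H (H ⊗[k] H) H B).toLinearMap
          ∘ₗ map (map LinearMap.id (Coalgebra.comul : H →ₗ[k] H ⊗[k] H)
                ∘ₗ (Coalgebra.comul : H →ₗ[k] H ⊗[k] H)) δ
  /-- braided multiplicativity of the coproduct:
  `Δ(ab) = a₁((a₂)⁽¹⁾▷b₁) ⊗ (a₂)⁽²⁾b₂` -/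
  braided_comul_mul : (Coalgebra.comul : B →ₗ[k] B ⊗[k] B) ∘ₗ LinearMap.mul' k B
      = map (LinearMap.mul' k B ∘ₗ map LinearMap.id act
              ∘ₗ (TensorProduct.assoc k B H B).toLinearMap)
            (LinearMap.mul' k B)
          ∘ₗ (tensorTensorTensorComm k (B ⊗[k] H) B B B).toLinearMap
          ∘ₗ map ((TensorProduct.assoc k B H B).symm.toLinearMap
                ∘ₗ map LinearMap.id δ ∘ₗ (Coalgebra.comul : B →ₗ[k] B ⊗[k] B))
              (Coalgebra.comul : B →ₗ[k] B ⊗[k] B)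
  /-- braided antipode: `S_B(b₁) b₂ = ε(b)1` -/
  SB_left : LinearMap.mul' k B ∘ₗ map SB LinearMap.id
        ∘ₗ (Coalgebra.comul : B →ₗ[k] B ⊗[k] B)
      = Algebra.linearMap k B ∘ₗ (Coalgebra.counit : B →ₗ[k] k)
  /-- braided antipode: `b₁ S_B(b₂) = ε(b)1` -/
  SB_right : LinearMap.mul' k B ∘ₗ map LinearMap.id SB
        ∘ₗ (Coalgebra.comul : B →ₗ[k] B ⊗[k] B)
      = Algebra.linearMap k B ∘ₗ (Coalgebra.counit : B →ₗ[k] k)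
  /-- `d` is an algebra map -/
  d_mul : ∀ a b : B, d (a * b) = d a * d b
  /-- `d(1) = 1` -/
  d_one : d 1 = 1
  /-- twisted Hopf-map condition: `Δ_H(d(b)) = d(b₁)(b₂)⁽¹⁾ ⊗ d((b₂)⁽²⁾)` -/
  d_comul : (Coalgebra.comul : H →ₗ[k] H ⊗[k] H) ∘ₗ d
      = map (LinearMap.mul' k H) LinearMap.id
          ∘ₗ (TensorProduct.assoc k H H H).symm.toLinearMap
          ∘ₗ map d (map LinearMap.id d ∘ₗ δ)
          ∘ₗ (Coalgebra.comul : B →ₗ[k] B ⊗[k] B)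
  /-- twisted Hopf-map condition: `ε(d(b)) = ε(b)` -/
  d_counit : (Coalgebra.counit : H →ₗ[k] k) ∘ₗ d = (Coalgebra.counit : B →ₗ[k] k)
  /-- `d(h▷b) = h₁ d(b) S(h₂)` -/
  d_act : d ∘ₗ act = LinearMap.mul' k H
      ∘ₗ map LinearMap.id (LinearMap.mul' k H
            ∘ₗ map LinearMap.id (HopfAlgebra.antipode (R := k) : H →ₗ[k] H)
            ∘ₗ (TensorProduct.comm k H H).toLinearMap)
      ∘ₗ (TensorProduct.assoc k H H H).toLinearMap
      ∘ₗ map (Coalgebra.comul : H →ₗ[k] H ⊗[k] H) d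

section Aux
variable {act : H ⊗[k] B →ₗ[k] B} {δ : B →ₗ[k] H ⊗[k] B} {SB : B →ₗ[k] B} {d : B →ₗ[k] H}
variable {k H B}
variable (hbcm : BraidedHopfPrecrossedModule k H B act δ SB d)

/-- `∑ ε(a₂) • a₁ = a` -/
lemma st19_sum_smul_counit (c : B) (r : Coalgebra.Repr k c (B × B)) :
    ∑ i ∈ r.index, Coalgebra.counit (R := k) (r.right i) • r.left i = c := by
  have h2 := congrArg (TensorProduct.rid k B) (Coalgebra.sum_tmul_counit_eq r)
  simp only [map_sum, rid_tmul, one_smul] at h2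
  exact h2

/-- `∑ ε(a₁) • a₂ = a` -/
lemma st19_sum_counit_smul (c : B) (r : Coalgebra.Repr k c (B × B)) :
    ∑ i ∈ r.index, Coalgebra.counit (R := k) (r.left i) • r.right i = c := by
  have h2 := congrArg (TensorProduct.lid k B) (Coalgebra.sum_counit_tmul_eq r)
  simp only [map_sum, lid_tmul, one_smul] at h2
  exact h2

include hbcm

lemma st19_SBl (c : B) (r : Coalgebra.Repr k c (B × B)) :
    ∑ i ∈ r.index, SB (r.left i) * r.right i = Coalgebra.counit (R := k) c • (1 : B) := by
  have h := LinearMap.congr_fun hbcm.SB_left c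
  simp only [LinearMap.comp_apply] at h
  rw [← r.eq] at h
  simp only [map_sum, map_tmul, LinearMap.mul'_apply, LinearMap.id_coe, id_eq,
    Algebra.linearMap_apply, Algebra.algebraMap_eq_smul_one] at h
  exact h

lemma st19_SBr (c : B) (r : Coalgebra.Repr k c (B × B)) :
    ∑ i ∈ r.index, r.left i * SB (r.right i) = Coalgebra.counit (R := k) c • (1 : B) := by
  have h := LinearMap.congr_fun hbcm.SB_right c
  simp only [LinearMap.comp_apply] at h
  rw [← r.eq] at h
  simp only [map_sum, map_tmul, LinearMap.mul'_apply, LinearMap.id_coe, id_eq,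
    Algebra.linearMap_apply, Algebra.algebraMap_eq_smul_one] at h
  exact h

lemma st19_d_counit (c : B) :
    Coalgebra.counit (R := k) (d c) = Coalgebra.counit (R := k) c :=
  LinearMap.congr_fun hbcm.d_counit c

/-- `∑ d(S_B(a₁)) d(a₂) = ε(a) 1` -/
lemma st19_dSB (c : B) (r : Coalgebra.Repr k c (B × B)) :
    ∑ i ∈ r.index, d (SB (r.left i)) * d (r.right i)
      = Coalgebra.counit (R := k) c • (1 : H) := by
  calc ∑ i ∈ r.index, d (SB (r.left i)) * d (r.right i)
      = ∑ i ∈ r.index, d (SB (r.left i) * r.right i) := by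
        refine Finset.sum_congr rfl fun i _ => ?_
        rw [hbcm.d_mul]
    _ = d (∑ i ∈ r.index, SB (r.left i) * r.right i) := by rw [map_sum]
    _ = Coalgebra.counit (R := k) c • (1 : H) := by
        rw [st19_SBl hbcm c r, map_smul, hbcm.d_one]

end Aux

section Aux2
variable {k H B}

/-- `f(b) = b⁽¹⁾ ε(b⁽²⁾)` as a linear map. -/
def st19_fm (δ : B →ₗ[k] H ⊗[k] B) : B →ₗ[k] H :=
  (TensorProduct.rid k H).toLinearMap
    ∘ₗ LinearMap.lTensor H (Coalgebra.counit (R := k) (A := B)) ∘ₗ δ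

variable {act : H ⊗[k] B →ₗ[k] B} {δ : B →ₗ[k] H ⊗[k] B} {SB : B →ₗ[k] B} {d : B →ₗ[k] H}

lemma st19_fm_eval (c : B) (U : Finset (H × B))
    (hU : δ c = ∑ p ∈ U, p.1 ⊗ₜ[k] p.2) :
    st19_fm δ c = ∑ p ∈ U, Coalgebra.counit (R := k) p.2 • p.1 := by
  simp only [st19_fm, LinearMap.comp_apply, hU, map_sum, LinearMap.lTensor_tmul,
    LinearEquiv.coe_coe, rid_tmul]

variable (hbcm : BraidedHopfPrecrossedModule k H B act δ SB d)
include hbcm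

set_option synthInstance.maxHeartbeats 400000 in
lemma st19_d_conv_f (c : B) (r : Coalgebra.Repr k c (B × B)) :
    d c = ∑ i ∈ r.index, d (r.left i) * st19_fm δ (r.right i) := by
  choose V hV using fun i : r.ι => TensorProduct.exists_finset (R := k) (δ (r.right i))
  have h := LinearMap.congr_fun hbcm.d_comul c
  simp only [LinearMap.comp_apply] at h
  rw [← r.eq] at h
  have h2 := congrArg (⇑((TensorProduct.rid k H).toLinearMap
      ∘ₗ LinearMap.lTensor H (Coalgebra.counit (R := k) (A := H)))) h
  simp only [LinearMap.comp_apply, LinearEquiv.coe_coe] at h2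
  rw [Coalgebra.lTensor_counit_comul] at h2
  simp only [rid_tmul, one_smul, map_sum, map_tmul, LinearMap.comp_apply] at h2
  simp only [hV] at h2
  simp only [map_sum, map_tmul, LinearMap.id_coe, id_eq, tmul_sum, assoc_symm_tmul,
    LinearMap.mul'_apply, LinearMap.lTensor_tmul, LinearEquiv.coe_coe, rid_tmul,
    st19_d_counit hbcm] at h2
  rw [h2]
  refine Finset.sum_congr rfl fun i _ => ?_
  rw [st19_fm_eval (r.right i) (V i) (hV i), Finset.mul_sum]
  exact Finset.sum_congr rfl fun q _ => (mul_smul_comm _ _ _).symm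

end Aux2

section Aux3
variable {k H B}
variable {act : H ⊗[k] B →ₗ[k] B} {δ : B →ₗ[k] H ⊗[k] B} {SB : B →ₗ[k] B} {d : B →ₗ[k] H}
variable (hbcm : BraidedHopfPrecrossedModule k H B act δ SB d)
include hbcm

/-- Key lemma: `b⁽¹⁾ ε(b⁽²⁾) = ε(b) 1`. -/
lemma st19_fm_eq (c : B) : st19_fm δ c = Coalgebra.counit (R := k) c • (1 : H) := by
  set r := Coalgebra.Repr.arbitrary k c with hr
  set t := fun i : r.ι => Coalgebra.Repr.arbitrary k (r.left i) with ht
  set s := fun i : r.ι => Coalgebra.Repr.arbitrary k (r.right i) with hs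
  calc st19_fm δ c
      = ∑ i ∈ r.index, Coalgebra.counit (R := k) (r.left i) • st19_fm δ (r.right i) := by
        conv_lhs => rw [← st19_sum_counit_smul c r]
        rw [map_sum]
        simp only [map_smul]
    _ = ∑ i ∈ r.index, (∑ j ∈ (t i).index, d (SB ((t i).left j)) * d ((t i).right j))
          * st19_fm δ (r.right i) := by
        refine Finset.sum_congr rfl fun i _ => ?_
        rw [st19_dSB hbcm (r.left i) (t i), smul_mul_assoc, one_mul]
    _ = ∑ i ∈ r.index, ∑ j ∈ (t i).index,
          d (SB ((t i).left j)) * (d ((t i).right j) * st19_fm δ (r.right i)) := by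
        simp_rw [Finset.sum_mul, mul_assoc]
    _ = ∑ i ∈ r.index, ∑ j ∈ (s i).index,
          d (SB (r.left i)) * (d ((s i).left j) * st19_fm δ ((s i).right j)) := by
        have key := Coalgebra.sum_tmul_tmul_eq r t s
        have h2 := congrArg (⇑(LinearMap.mul' k H
          ∘ₗ map (d ∘ₗ SB) (LinearMap.mul' k H ∘ₗ map d (st19_fm δ)))) key
        simpa only [map_sum, LinearMap.comp_apply, map_tmul, LinearMap.mul'_apply] using h2
    _ = ∑ i ∈ r.index, d (SB (r.left i)) * d (r.right i) := by
        refine Finset.sum_congr rfl fun i _ => ?_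
        rw [← Finset.mul_sum, ← st19_d_conv_f hbcm (r.right i) (s i)]
    _ = Coalgebra.counit (R := k) c • (1 : H) := st19_dSB hbcm c r

lemma st19_fm_dec (c : B) (U : Finset (H × B))
    (hU : δ c = ∑ p ∈ U, p.1 ⊗ₜ[k] p.2) :
    ∑ p ∈ U, Coalgebra.counit (R := k) p.2 • p.1
      = Coalgebra.counit (R := k) c • (1 : H) := by
  rw [← st19_fm_eval c U hU, st19_fm_eq hbcm]

end Aux3

section Aux4
variable {k H B}
variable {act : H ⊗[k] B →ₗ[k] B} {δ : B →ₗ[k] H ⊗[k] B} {SB : B →ₗ[k] B} {d : B →ₗ[k] H}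
variable (hbcm : BraidedHopfPrecrossedModule k H B act δ SB d)
include hbcm

/-- The key triple-Sweedler / comodule-coalgebra transport identity. -/
lemma st19_Ekey (a : B) (r : Coalgebra.Repr k a (B × B))
    (t : ∀ i : r.ι, Coalgebra.Repr k (r.left i) (B × B))
    (U : r.ι → Finset (H × B))
    (hU : ∀ i, δ (r.right i) = ∑ p ∈ U i, p.1 ⊗ₜ[k] p.2)
    (G : ∀ i : r.ι, (t i).ι → Finset (H × B))
    (hG : ∀ (i : r.ι) (m : (t i).ι), δ ((t i).right m) = ∑ q ∈ G i m, q.1 ⊗ₜ[k] q.2)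
    (w : ∀ p : H × B, Coalgebra.Repr k p.2 (B × B)) :
    ∑ i ∈ r.index, ∑ m ∈ (t i).index, ∑ q ∈ G i m, ∑ p ∈ U i,
        (t i).left m ⊗ₜ[k] ((q.1 * p.1) ⊗ₜ[k] (q.2 ⊗ₜ[k] p.2))
      = ∑ i ∈ r.index, ∑ p ∈ U i, ∑ m ∈ (w p).index,
        r.left i ⊗ₜ[k] (p.1 ⊗ₜ[k] ((w p).left m ⊗ₜ[k] (w p).right m)) := by
  set Θ : B ⊗[k] B →ₗ[k] H ⊗[k] (B ⊗[k] B) :=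
    map (LinearMap.mul' k H) LinearMap.id
      ∘ₗ (tensorTensorTensorComm k H B H B).toLinearMap ∘ₗ map δ δ with hΘ
  have hΘval : ∀ (x y : B) (Ux Uy : Finset (H × B)),
      δ x = ∑ q ∈ Ux, q.1 ⊗ₜ[k] q.2 → δ y = ∑ p ∈ Uy, p.1 ⊗ₜ[k] p.2 →
      Θ (x ⊗ₜ[k] y) = ∑ q ∈ Ux, ∑ p ∈ Uy, (q.1 * p.1) ⊗ₜ[k] (q.2 ⊗ₜ[k] p.2) := by
    intro x y Ux Uy hx hy
    simp only [hΘ, LinearMap.comp_apply, map_tmul, hx, hy, sum_tmul, tmul_sum, map_sum,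
      LinearEquiv.coe_coe, tensorTensorTensorComm_tmul, LinearMap.mul'_apply,
      LinearMap.id_coe, id_eq]
    rw [Finset.sum_comm]
  set s := fun i : r.ι => Coalgebra.Repr.arbitrary k (r.right i) with hs
  have key := Coalgebra.sum_tmul_tmul_eq r t s
  have h2 := congrArg (⇑(map (LinearMap.id (R := k) (M := B)) Θ)) key
  simp only [map_sum, map_tmul, LinearMap.id_coe, id_eq] at h2
  calc ∑ i ∈ r.index, ∑ m ∈ (t i).index, ∑ q ∈ G i m, ∑ p ∈ U i,
        (t i).left m ⊗ₜ[k] ((q.1 * p.1) ⊗ₜ[k] (q.2 ⊗ₜ[k] p.2))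
      = ∑ i ∈ r.index, ∑ m ∈ (t i).index,
          (t i).left m ⊗ₜ[k] Θ ((t i).right m ⊗ₜ[k] (r.right i)) := by
        refine Finset.sum_congr rfl fun i _ => Finset.sum_congr rfl fun m _ => ?_
        rw [hΘval _ _ _ _ (hG i m) (hU i)]
        simp only [tmul_sum]
    _ = ∑ i ∈ r.index, ∑ j ∈ (s i).index,
          r.left i ⊗ₜ[k] Θ ((s i).left j ⊗ₜ[k] (s i).right j) := h2
    _ = ∑ i ∈ r.index, ∑ p ∈ U i, ∑ m ∈ (w p).index,
        r.left i ⊗ₜ[k] (p.1 ⊗ₜ[k] ((w p).left m ⊗ₜ[k] (w p).right m)) := by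
        refine Finset.sum_congr rfl fun i _ => ?_
        rw [← tmul_sum, ← map_sum, (s i).eq]
        have hc := LinearMap.congr_fun hbcm.comod_comul (r.right i)
        simp only [LinearMap.comp_apply] at hc
        have : Θ (Coalgebra.comul (r.right i))
            = map LinearMap.id (Coalgebra.comul (R := k)) (δ (r.right i)) := by
          rw [hΘ]
          simp only [LinearMap.comp_apply]
          exact hc.symm
        rw [this, hU i]
        simp only [map_sum, map_tmul, LinearMap.id_coe, id_eq, tmul_sum]
        refine Finset.sum_congr rfl fun p _ => ?_
        rw [← (w p).eq]
        simp only [tmul_sum]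
end Aux4

/-- Lemma 3.3(i): the braided crossed-module condition
`d(a)▷b = a₁ ((a₂)⁽¹⁾▷b) S_B((a₂)⁽²⁾)` holds for all `a, b ∈ B` iff
`((d(a₁)(a₂)⁽¹⁾)▷b)(a₂)⁽²⁾ = ab` holds for all `a, b ∈ B`, i.e. iff `B` is braided
commutative with respect to the coaction `Δ_L` induced by `d`. -/
theorem statement19 (act : H ⊗[k] B →ₗ[k] B) (δ : B →ₗ[k] H ⊗[k] B)
    (SB : B →ₗ[k] B) (d : B →ₗ[k] H)
    (hS : Function.Bijective (HopfAlgebra.antipode (R := k) : H →ₗ[k] H))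
    (hbcm : BraidedHopfPrecrossedModule k H B act δ SB d) :
    (∀ a b : B,
      act (d a ⊗ₜ[k] b)
        = LinearMap.mul' k B
            (map LinearMap.id
              (LinearMap.mul' k B
                ∘ₗ map (act ∘ₗ (TensorProduct.mk k H B).flip b) SB ∘ₗ δ)
              (Coalgebra.comul a)))
    ↔ (∀ a b : B,
      LinearMap.mul' k B
          (map (act ∘ₗ (TensorProduct.mk k H B).flip b) LinearMap.id
            (DLind k H B δ d a))
        = a * b) := by
  constructor
  · intro hA a b
    classical
    set r := Coalgebra.Repr.arbitrary k a with hrdef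
    choose U hU using fun i : r.ι => TensorProduct.exists_finset (R := k) (δ (r.right i))
    set t := fun i : r.ι => Coalgebra.Repr.arbitrary k (r.left i) with htdef
    choose G hG using fun (i : r.ι) (m : (t i).ι) =>
      TensorProduct.exists_finset (R := k) (δ ((t i).right m))
    set w := fun p : H × B => Coalgebra.Repr.arbitrary k p.2 with hwdef
    calc LinearMap.mul' k B
          (map (act ∘ₗ (TensorProduct.mk k H B).flip b) LinearMap.id
            (DLind k H B δ d a))
        = ∑ i ∈ r.index, ∑ p ∈ U i,
            act ((d (r.left i) * p.1) ⊗ₜ[k] b) * p.2 := by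
          rw [DLind]
          simp only [LinearMap.comp_apply]
          rw [← r.eq]
          simp only [map_sum, map_tmul, hU, tmul_sum, LinearEquiv.coe_coe, assoc_symm_tmul,
            LinearMap.mul'_apply, LinearMap.id_coe, id_eq, LinearMap.comp_apply,
            LinearMap.flip_apply, TensorProduct.mk_apply]
      _ = ∑ i ∈ r.index, ∑ p ∈ U i,
            act (d (r.left i) ⊗ₜ[k] act (p.1 ⊗ₜ[k] b)) * p.2 := by
          refine Finset.sum_congr rfl fun i _ => Finset.sum_congr rfl fun p _ => ?_
          rw [hbcm.act_mul]
      _ = ∑ i ∈ r.index, ∑ p ∈ U i, ∑ m ∈ (t i).index, ∑ q ∈ G i m,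
            (t i).left m
              * ((act (q.1 ⊗ₜ[k] act (p.1 ⊗ₜ[k] b)) * SB q.2) * p.2) := by
          refine Finset.sum_congr rfl fun i _ => Finset.sum_congr rfl fun p _ => ?_
          rw [hA (r.left i) (act (p.1 ⊗ₜ[k] b))]
          rw [← (t i).eq]
          simp only [map_sum, map_tmul, LinearMap.comp_apply, hG, tmul_sum,
            LinearMap.mul'_apply, LinearMap.id_coe, id_eq, LinearMap.flip_apply,
            TensorProduct.mk_apply, Finset.mul_sum, Finset.sum_mul, mul_assoc]
      _ = ∑ i ∈ r.index, ∑ m ∈ (t i).index, ∑ q ∈ G i m, ∑ p ∈ U i,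
            (t i).left m
              * ((act ((q.1 * p.1) ⊗ₜ[k] b) * SB q.2) * p.2) := by
          refine Finset.sum_congr rfl fun i _ => ?_
          rw [Finset.sum_comm]
          refine Finset.sum_congr rfl fun m _ => ?_
          rw [Finset.sum_comm]
          refine Finset.sum_congr rfl fun q _ => Finset.sum_congr rfl fun p _ => ?_
          rw [hbcm.act_mul]
      _ = ∑ i ∈ r.index, ∑ p ∈ U i, ∑ m ∈ (w p).index,
            r.left i
              * ((act (p.1 ⊗ₜ[k] b) * SB ((w p).left m)) * ((w p).right m)) := by
          have e5 := congrArg (⇑(LinearMap.mul' k B ∘ₗ map (LinearMap.id (R := k) (M := B))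
              (LinearMap.mul' k B
                ∘ₗ map (LinearMap.mul' k B
                    ∘ₗ map (act ∘ₗ (TensorProduct.mk k H B).flip b) SB) LinearMap.id
                ∘ₗ (TensorProduct.assoc k H B B).symm.toLinearMap)))
            (st19_Ekey hbcm a r t U hU G hG w)
          simpa only [map_sum, LinearMap.comp_apply, map_tmul, LinearEquiv.coe_coe,
            assoc_symm_tmul, LinearMap.mul'_apply, LinearMap.id_coe, id_eq,
            LinearMap.flip_apply, TensorProduct.mk_apply] using e5
      _ = ∑ i ∈ r.index, ∑ p ∈ U i,
            Coalgebra.counit (R := k) p.2 • (r.left i * act (p.1 ⊗ₜ[k] b)) := by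
          refine Finset.sum_congr rfl fun i _ => Finset.sum_congr rfl fun p _ => ?_
          rw [← Finset.mul_sum]
          simp only [mul_assoc]
          rw [← Finset.mul_sum, st19_SBl hbcm p.2 (w p)]
          simp only [mul_smul_comm, mul_one]
      _ = ∑ i ∈ r.index, Coalgebra.counit (R := k) (r.right i) • (r.left i * b) := by
          refine Finset.sum_congr rfl fun i _ => ?_
          have hstep : ∑ p ∈ U i,
                Coalgebra.counit (R := k) p.2 • (r.left i * act (p.1 ⊗ₜ[k] b))
              = r.left i
                * act ((∑ p ∈ U i, Coalgebra.counit (R := k) p.2 • p.1) ⊗ₜ[k] b) := by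
            rw [sum_tmul, map_sum, Finset.mul_sum]
            refine Finset.sum_congr rfl fun p _ => ?_
            rw [← smul_tmul', map_smul, mul_smul_comm]
          rw [hstep, st19_fm_dec hbcm (r.right i) (U i) (hU i)]
          rw [← smul_tmul', map_smul, hbcm.act_one, mul_smul_comm]
      _ = a * b := by
          simp only [← smul_mul_assoc]
          rw [← Finset.sum_mul, st19_sum_smul_counit a r]
  · intro hC a b
    classical
    set r := Coalgebra.Repr.arbitrary k a with hrdef
    choose U hU using fun i : r.ι => TensorProduct.exists_finset (R := k) (δ (r.right i))
    set t := fun i : r.ι => Coalgebra.Repr.arbitrary k (r.left i) with htdef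
    choose G hG using fun (i : r.ι) (m : (t i).ι) =>
      TensorProduct.exists_finset (R := k) (δ ((t i).right m))
    set w := fun p : H × B => Coalgebra.Repr.arbitrary k p.2 with hwdef
    symm
    calc LinearMap.mul' k B
            (map LinearMap.id
              (LinearMap.mul' k B
                ∘ₗ map (act ∘ₗ (TensorProduct.mk k H B).flip b) SB ∘ₗ δ)
              (Coalgebra.comul a))
        = ∑ i ∈ r.index, ∑ p ∈ U i,
            (r.left i * act (p.1 ⊗ₜ[k] b)) * SB p.2 := by
          rw [← r.eq]
          simp only [map_sum, map_tmul, LinearMap.comp_apply, hU, tmul_sum,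
            LinearMap.mul'_apply, LinearMap.id_coe, id_eq, LinearMap.flip_apply,
            TensorProduct.mk_apply, map_sum, Finset.mul_sum, mul_assoc]
      _ = ∑ i ∈ r.index, ∑ p ∈ U i, ∑ m ∈ (t i).index, ∑ q ∈ G i m,
            act (d ((t i).left m) ⊗ₜ[k] act ((q.1 * p.1) ⊗ₜ[k] b))
              * (q.2 * SB p.2) := by
          refine Finset.sum_congr rfl fun i _ => Finset.sum_congr rfl fun p _ => ?_
          rw [← hC (r.left i) (act (p.1 ⊗ₜ[k] b))]
          rw [DLind]
          simp only [LinearMap.comp_apply]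
          rw [← (t i).eq]
          simp only [map_sum, map_tmul, hG, tmul_sum, LinearEquiv.coe_coe,
            assoc_symm_tmul, LinearMap.mul'_apply, LinearMap.id_coe, id_eq,
            LinearMap.comp_apply, LinearMap.flip_apply, TensorProduct.mk_apply,
            Finset.sum_mul, mul_assoc]
          refine Finset.sum_congr rfl fun m _ => Finset.sum_congr rfl fun q _ => ?_
          rw [hbcm.act_mul, ← hbcm.act_mul q.1 p.1 b]
      _ = ∑ i ∈ r.index, ∑ m ∈ (t i).index, ∑ q ∈ G i m, ∑ p ∈ U i,
            act (d ((t i).left m) ⊗ₜ[k] act ((q.1 * p.1) ⊗ₜ[k] b))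
              * (q.2 * SB p.2) := by
          refine Finset.sum_congr rfl fun i _ => ?_
          rw [Finset.sum_comm]
          exact Finset.sum_congr rfl fun m _ => Finset.sum_comm
      _ = ∑ i ∈ r.index, ∑ p ∈ U i, ∑ m ∈ (w p).index,
            act (d (r.left i) ⊗ₜ[k] act (p.1 ⊗ₜ[k] b))
              * ((w p).left m * SB ((w p).right m)) := by
          have e5 := congrArg (⇑(LinearMap.mul' k B
              ∘ₗ map (act ∘ₗ map d (act ∘ₗ (TensorProduct.mk k H B).flip b))
                  (LinearMap.mul' k B ∘ₗ map LinearMap.id SB)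
              ∘ₗ (TensorProduct.assoc k B H (B ⊗[k] B)).symm.toLinearMap))
            (st19_Ekey hbcm a r t U hU G hG w)
          simpa only [map_sum, LinearMap.comp_apply, map_tmul, LinearEquiv.coe_coe,
            assoc_symm_tmul, LinearMap.mul'_apply, LinearMap.id_coe, id_eq,
            LinearMap.flip_apply, TensorProduct.mk_apply] using e5
      _ = ∑ i ∈ r.index, ∑ p ∈ U i,
            Coalgebra.counit (R := k) p.2
              • act (d (r.left i) ⊗ₜ[k] act (p.1 ⊗ₜ[k] b)) := by
          refine Finset.sum_congr rfl fun i _ => Finset.sum_congr rfl fun p _ => ?_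
          rw [← Finset.mul_sum, st19_SBr hbcm p.2 (w p)]
          simp only [mul_smul_comm, mul_one]
      _ = ∑ i ∈ r.index,
            Coalgebra.counit (R := k) (r.right i) • act (d (r.left i) ⊗ₜ[k] b) := by
          refine Finset.sum_congr rfl fun i _ => ?_
          have hstep : ∑ p ∈ U i,
                Coalgebra.counit (R := k) p.2
                  • act (d (r.left i) ⊗ₜ[k] act (p.1 ⊗ₜ[k] b))
              = act (d (r.left i)
                  ⊗ₜ[k] act ((∑ p ∈ U i, Coalgebra.counit (R := k) p.2 • p.1) ⊗ₜ[k] b)) := by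
            rw [sum_tmul, map_sum, tmul_sum, map_sum]
            refine Finset.sum_congr rfl fun p _ => ?_
            rw [← smul_tmul', map_smul, tmul_smul, map_smul]
          rw [hstep, st19_fm_dec hbcm (r.right i) (U i) (hU i), ← smul_tmul',
            map_smul, hbcm.act_one, tmul_smul, map_smul]
      _ = act (d a ⊗ₜ[k] b) := by
          have hda : (∑ i ∈ r.index,
              Coalgebra.counit (R := k) (r.right i) • d (r.left i)) = d a := by
            simp_rw [← map_smul]
            rw [← map_sum, st19_sum_smul_counit a r]
          rw [← hda, sum_tmul, map_sum]
          exact Finset.sum_congr rfl fun i _ => by rw [← smul_tmul', map_smul]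

end
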